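/- Let p be a real polynomial with exactly two distinct zeroes, both real, of degree n ≥ 2. Then for every real κ ≤ (n−1)/n, the polynomial F_κ[p] = p·p'' − κ(p')² has only real zeroes; and for κ > (n−1)/n it has exactly 2 non-real zeroes (counted with multiplicity). -/

import Mathlib

open Polynomial

lemma dl1 (c : ℝ) (m : ℕ) :
    derivative ((X - C c) ^ m) * (X - C c) = C (m : ℝ) * (X - C c) ^ m := by
  rw [derivative_X_sub_C_pow]
  cases m with
  | zero => simp
  | succ k => rw [Nat.add_sub_cancel, mul_assoc, ← pow_succ]

lemma dl2 (c : ℝ) (m : ℕ) :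
    derivative (derivative ((X - C c) ^ m)) * (X - C c) ^ 2
      = C ((m : ℝ) * ((m : ℝ) - 1)) * (X - C c) ^ m := by
  match m with
  | 0 => simp
  | 1 => simp
  | (k+2) =>
    have e1 : k + 2 - 1 = k + 1 := rfl
    have e2 : k + 1 - 1 = k := rfl
    rw [derivative_X_sub_C_pow, e1, derivative_C_mul, derivative_X_sub_C_pow, e2]
    have h3 : ((k+2:ℕ):ℝ) * (((k+2:ℕ):ℝ) - 1) = ((k+2:ℕ):ℝ) * ((k+1:ℕ):ℝ) := by
      push_cast; ring
    rw [h3, C_mul]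
    ring

lemma factorize (a₀ l₁ l₂ : ℝ) (n₁ n₂ : ℕ) (hn₁ : 1 ≤ n₁) (hn₂ : 1 ≤ n₂)
    (p : ℝ[X]) (hp : p = C a₀ * (X - C l₁) ^ n₁ * (X - C l₂) ^ n₂) (κ : ℝ) :
    p * derivative (derivative p) - C κ * (derivative p) ^ 2
      = C (a₀^2) * (X - C l₁) ^ (2*n₁-2) * (X - C l₂) ^ (2*n₂-2) *
        (C ((n₁:ℝ)*((n₁:ℝ)-1)) * (X - C l₂)^2
          + C (2*(n₁:ℝ)*(n₂:ℝ)) * ((X - C l₁)*(X - C l₂))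
          + C ((n₂:ℝ)*((n₂:ℝ)-1)) * (X - C l₁)^2
          - C κ * (C (n₁:ℝ) * (X - C l₂) + C (n₂:ℝ) * (X - C l₁))^2) := by
  set u : ℝ[X] := X - C l₁ with hu
  set v : ℝ[X] := X - C l₂ with hv
  set q : ℝ[X] := C ((n₁:ℝ)*((n₁:ℝ)-1)) * v^2 + C (2*(n₁:ℝ)*(n₂:ℝ)) * (u*v)
      + C ((n₂:ℝ)*((n₂:ℝ)-1)) * u^2
      - C κ * (C (n₁:ℝ) * v + C (n₂:ℝ) * u)^2 with hq
  have huv : u^2 * v^2 ≠ 0 :=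
    mul_ne_zero (pow_ne_zero _ (X_sub_C_ne_zero l₁)) (pow_ne_zero _ (X_sub_C_ne_zero l₂))
  apply mul_right_cancel₀ huv
  have hd : derivative p
      = C a₀ * (derivative (u^n₁) * v^n₂ + u^n₁ * derivative (v^n₂)) := by
    rw [hp, derivative_mul, derivative_mul, derivative_C]; ring
  have hd2 : derivative (derivative p)
      = C a₀ * (derivative (derivative (u^n₁)) * v^n₂
          + derivative (u^n₁) * derivative (v^n₂)
          + derivative (u^n₁) * derivative (v^n₂)
          + u^n₁ * derivative (derivative (v^n₂))) := by
    rw [hd]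
    simp only [derivative_mul, derivative_add, derivative_C]
    ring
  have E1 : derivative p * (u * v)
      = C a₀ * (u^n₁ * v^n₂) * (C (n₁:ℝ) * v + C (n₂:ℝ) * u) := by
    rw [hd]
    linear_combination (C a₀ * v^n₂ * v) * dl1 l₁ n₁ + (C a₀ * u^n₁ * u) * dl1 l₂ n₂
  have cross : (derivative (u^n₁) * u) * (derivative (v^n₂) * v)
      = (C (n₁:ℝ) * u^n₁) * (C (n₂:ℝ) * v^n₂) := by rw [dl1, dl1]
  have E2 : derivative (derivative p) * (u^2 * v^2)
      = C a₀ * (u^n₁ * v^n₂) * (C ((n₁:ℝ)*((n₁:ℝ)-1)) * v^2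
          + C (2*(n₁:ℝ)*(n₂:ℝ)) * (u*v) + C ((n₂:ℝ)*((n₂:ℝ)-1)) * u^2) := by
    have hC : (C (2*(n₁:ℝ)*(n₂:ℝ)) : ℝ[X]) = 2 * C (n₁:ℝ) * C (n₂:ℝ) := by
      simp [C_mul, map_ofNat]
    rw [hd2, hC]
    linear_combination (C a₀ * v^n₂ * v^2) * dl2 l₁ n₁ + (C a₀ * u^n₁ * u^2) * dl2 l₂ n₂
      + (2 * C a₀ * u * v) * cross
  obtain ⟨k₁, rfl⟩ : ∃ k, n₁ = k + 1 := ⟨n₁ - 1, by omega⟩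
  obtain ⟨k₂, rfl⟩ : ∃ k, n₂ = k + 1 := ⟨n₂ - 1, by omega⟩
  have e1 : 2*(k₁+1) - 2 = 2*k₁ := by omega
  have e2 : 2*(k₂+1) - 2 = 2*k₂ := by omega
  rw [e1, e2]
  have hC2 : (C (a₀^2) : ℝ[X]) = C a₀ * C a₀ := by rw [sq, C_mul]
  calc (p * derivative (derivative p) - C κ * derivative p ^ 2) * (u^2*v^2)
      = p * (derivative (derivative p) * (u^2*v^2))
        - C κ * (derivative p * (u*v))^2 := by ring
    _ = (C a₀ * u^(k₁+1) * v^(k₂+1)) * (C a₀ * (u^(k₁+1) * v^(k₂+1)) *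
          (C (((k₁+1:ℕ):ℝ) * (((k₁+1:ℕ):ℝ) - 1)) * v^2
            + C (2*((k₁+1:ℕ):ℝ)*((k₂+1:ℕ):ℝ)) * (u*v)
            + C (((k₂+1:ℕ):ℝ)*(((k₂+1:ℕ):ℝ)-1)) * u^2))
        - C κ * (C a₀ * (u^(k₁+1) * v^(k₂+1)) * (C ((k₁+1:ℕ):ℝ) * v + C ((k₂+1:ℕ):ℝ) * u))^2 := by
        rw [E2, E1, hp]
    _ = C (a₀^2) * u^(2*k₁) * v^(2*k₂) * q * (u^2*v^2) := by
        rw [hq, hC2]; ring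
lemma quadA (a b c : ℝ) (hd : 0 ≤ b^2 - 4*a*c) (h : a ≠ 0 ∨ (b = 0 ∧ c ≠ 0))
    (z : ℂ) (hz : (a:ℂ) * z^2 + (b:ℂ) * z + (c:ℂ) = 0) : z.im = 0 := by
  by_contra hy
  have him := congrArg Complex.im hz
  have hre := congrArg Complex.re hz
  simp [Complex.add_im, Complex.add_re, Complex.mul_im, Complex.mul_re, pow_two] at him hre
  set x := z.re; set y := z.im
  have h1 : y * (2*a*x + b) = 0 := by linear_combination him
  have h2 : 2*a*x + b = 0 := by
    rcases mul_eq_zero.mp h1 with h' | h'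
    · exact absurd h' hy
    · exact h'
  have hay : a * y ≠ 0 ∨ (b = 0 ∧ c ≠ 0) := by
    rcases h with ha | hbc
    · exact Or.inl (mul_ne_zero ha hy)
    · exact Or.inr hbc
  rcases h with ha | ⟨hb, hc⟩
  · have hb : b = -2*a*x := by linarith
    have hc2 : c = a*x^2 + a*y^2 := by rw [hb] at hre; linear_combination hre
    have hd' : 0 ≤ (-2*a*x)^2 - 4*a*(a*x^2+a*y^2) := by rw [hb, hc2] at hd; exact hd
    nlinarith [mul_self_pos.mpr (mul_ne_zero ha hy), hd']
  · by_cases haz : a = 0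
    · rw [haz, hb] at hre
      simp at hre
      exact hc (by linarith)
    · have hx : x = 0 := by
        rw [hb] at h2
        have : a * x = 0 := by linarith
        rcases mul_eq_zero.mp this with h' | h'
        · exact absurd h' haz
        · exact h'
      have hc2 : c = a*y^2 := by rw [hb, hx] at hre; linear_combination hre
      rw [hb, hc2] at hd
      nlinarith [mul_self_pos.mpr (mul_ne_zero haz hy), hd]

lemma quadB (a b c : ℝ) (ha : a ≠ 0) (hd : b^2 - 4*a*c < 0)
    (z : ℂ) (hz : (a:ℂ) * z^2 + (b:ℂ) * z + (c:ℂ) = 0) : z.im ≠ 0 := by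
  intro hy
  have hzx : z = (z.re : ℂ) := Complex.ext rfl (by simp [hy])
  rw [hzx] at hz
  have : ((a * z.re^2 + b * z.re + c : ℝ) : ℂ) = 0 := by push_cast; linear_combination hz
  have hr : a * z.re^2 + b * z.re + c = 0 := by exact_mod_cast this
  have key : (2*a*z.re+b)^2 = b^2 - 4*a*c := by linear_combination 4*a*hr
  nlinarith [sq_nonneg (2*a*z.re+b)]

set_option maxHeartbeats 1000000 in
open scoped Classical in
/-- Let `p` be a real polynomial of degree `n ≥ 2` with exactly two distinct
(real) zeroes. Then for `κ ≤ (n−1)/n` the polynomial `F_κ[p] = p·p'' − κ(p')²`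
has only real zeroes, while for `κ > (n−1)/n` it has exactly 2 non-real zeroes
counted with multiplicity. -/
theorem two_distinct_roots_F_kappa (a₀ l₁ l₂ : ℝ) (ha : a₀ ≠ 0) (hl : l₁ < l₂)
    (n₁ n₂ n : ℕ) (hn₁ : 1 ≤ n₁) (hn₂ : 1 ≤ n₂) (hn : n₁ + n₂ = n) (hn2 : 2 ≤ n)
    (p : ℝ[X]) (hp : p = C a₀ * (X - C l₁) ^ n₁ * (X - C l₂) ^ n₂) (κ : ℝ) :
    (κ ≤ ((n : ℝ) - 1) / n →
      ∀ z : ℂ, ((p * derivative (derivative p) - C κ * (derivative p) ^ 2).map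
          (algebraMap ℝ ℂ)).IsRoot z → z.im = 0) ∧
    (((n : ℝ) - 1) / n < κ →
      Multiset.card
        (((p * derivative (derivative p) - C κ * (derivative p) ^ 2).map
            (algebraMap ℝ ℂ)).roots.filter (fun z => z.im ≠ 0)) = 2) := by
  have hNpos : (0:ℝ) < (n:ℝ) := by
    have : 0 < n := by omega
    exact_mod_cast this
  have hNcast : (n:ℝ) = (n₁:ℝ) + (n₂:ℝ) := by rw [← hn]; push_cast; ring
  have hn₁' : (1:ℝ) ≤ (n₁:ℝ) := by exact_mod_cast hn₁
  have hn₂' : (1:ℝ) ≤ (n₂:ℝ) := by exact_mod_cast hn₂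
  set A : ℝ := (1-κ)*(n₁:ℝ)^2 - (n₁:ℝ) with hA
  set B : ℝ := 2*(1-κ)*(n₁:ℝ)*(n₂:ℝ) with hB
  set Cc : ℝ := (1-κ)*(n₂:ℝ)^2 - (n₂:ℝ) with hCc
  set qa : ℝ := A + B + Cc with hqa
  set qb : ℝ := -(2*A*l₂ + B*(l₁+l₂) + 2*Cc*l₁) with hqb
  set qc : ℝ := A*l₂^2 + B*l₁*l₂ + Cc*l₁^2 with hqc
  -- standard form of the quadratic factor
  have hqstd : (C ((n₁:ℝ)*((n₁:ℝ)-1)) * (X - C l₂)^2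
          + C (2*(n₁:ℝ)*(n₂:ℝ)) * ((X - C l₁)*(X - C l₂))
          + C ((n₂:ℝ)*((n₂:ℝ)-1)) * (X - C l₁)^2
          - C κ * (C (n₁:ℝ) * (X - C l₂) + C (n₂:ℝ) * (X - C l₁))^2 : ℝ[X])
      = C qa * X^2 + C qb * X + C qc := by
    rw [hqa, hqb, hqc, hA, hB, hCc]
    simp only [map_add, map_sub, map_mul, map_pow, map_one, map_neg, map_ofNat]
    ring
  have hFstd : p * derivative (derivative p) - C κ * (derivative p) ^ 2
      = C (a₀^2) * (X - C l₁) ^ (2*n₁-2) * (X - C l₂) ^ (2*n₂-2) *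
        (C qa * X^2 + C qb * X + C qc) := by
    rw [factorize a₀ l₁ l₂ n₁ n₂ hn₁ hn₂ p hp κ, hqstd]
  have hdisc : qb^2 - 4*qa*qc
      = 4*(n₁:ℝ)*(n₂:ℝ)*((1-κ)*((n₁:ℝ)+(n₂:ℝ)) - 1)*(l₂-l₁)^2 := by
    rw [hqb, hqa, hqc, hA, hB, hCc]; ring
  have hqaN : qa = ((n₁:ℝ)+(n₂:ℝ)) * ((1-κ)*((n₁:ℝ)+(n₂:ℝ)) - 1) := by
    rw [hqa, hA, hB, hCc]; ring
  have hdne : (l₂ - l₁) ≠ 0 := by linarith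
  -- the mapped polynomial in factored form
  set f := algebraMap ℝ ℂ with hf
  set Q : ℂ[X] := C (qa:ℂ) * X^2 + C (qb:ℂ) * X + C (qc:ℂ) with hQ
  have hFC : (p * derivative (derivative p) - C κ * (derivative p) ^ 2).map f
      = C ((a₀:ℂ)^2) * ((X - C (l₁:ℂ)) ^ (2*n₁-2) *
          ((X - C (l₂:ℂ)) ^ (2*n₂-2) * Q)) := by
    rw [hFstd, hQ]
    simp only [Polynomial.map_mul, Polynomial.map_pow, Polynomial.map_sub,
      Polynomial.map_add, Polynomial.map_C, Polynomial.map_X, hf, Complex.coe_algebraMap,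
      Complex.ofReal_pow]
    ring
  constructor
  · -- κ ≤ (n-1)/n
    intro hκ z hz
    have hs : 0 ≤ (1-κ)*((n₁:ℝ)+(n₂:ℝ)) - 1 := by
      rw [← hNcast]
      rw [le_div_iff₀ hNpos] at hκ
      nlinarith
    have hd0 : 0 ≤ qb^2 - 4*qa*qc := by
      rw [hdisc]
      have h1 : (0:ℝ) < (n₁:ℝ) := by linarith
      have h2 : (0:ℝ) < (n₂:ℝ) := by linarith
      positivity
    have hdisj : qa ≠ 0 ∨ (qb = 0 ∧ qc ≠ 0) := by
      by_cases hqa0 : qa = 0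
      · right
        have hs0 : (1-κ)*((n₁:ℝ)+(n₂:ℝ)) - 1 = 0 := by
          rw [hqaN] at hqa0
          rcases mul_eq_zero.mp hqa0 with h | h
          · linarith
          · exact h
        have hqb0 : qb = 0 := by
          have hq2 : qb^2 = qb^2 - 4*qa*qc := by rw [hqa0]; ring
          have h0 : qb^2 = 0 := by rw [hq2, hdisc, hs0]; ring
          exact pow_eq_zero_iff (two_ne_zero) |>.mp h0
        refine ⟨hqb0, ?_⟩
        have hAeq : A = -(1-κ)*(n₁:ℝ)*(n₂:ℝ) := by
          rw [hA]; linear_combination (n₁:ℝ) * hs0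
        have h1κ : 0 < 1 - κ := by nlinarith
        have hAneg : A < 0 := by rw [hAeq]; nlinarith
        have hqcA : qc = A * (l₁ - l₂)^2 := by
          have : qa*l₁^2 + qb*l₁ + qc = A*(l₁-l₂)^2 := by
            rw [hqa, hqb, hqc]; ring
          rw [hqa0, hqb0] at this; linarith [this]
        rw [hqcA]
        exact mul_ne_zero (ne_of_lt hAneg) (pow_ne_zero _ (by linarith))
      · exact Or.inl hqa0
    -- decompose the root
    rw [IsRoot, hFC] at hz
    simp only [eval_mul, eval_pow, eval_sub, eval_add, eval_C, eval_X, hQ] at hz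
    rcases mul_eq_zero.mp hz with h | h
    · exact absurd h (by simpa using pow_ne_zero 2 (Complex.ofReal_ne_zero.mpr ha))
    rcases mul_eq_zero.mp h with h | h
    · have h1 : z - (l₁:ℂ) = 0 := (pow_eq_zero_iff'.mp h).1
      have hzl : z = (l₁:ℂ) := by linear_combination h1
      simp [hzl]
    rcases mul_eq_zero.mp h with h | h
    · have h1 : z - (l₂:ℂ) = 0 := (pow_eq_zero_iff'.mp h).1
      have hzl : z = (l₂:ℂ) := by linear_combination h1
      simp [hzl]
    · exact quadA qa qb qc hd0 hdisj z (by linear_combination h)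
  · -- κ > (n-1)/n
    intro hκ
    have hs : (1-κ)*((n₁:ℝ)+(n₂:ℝ)) - 1 < 0 := by
      rw [← hNcast]
      rw [div_lt_iff₀ hNpos] at hκ
      nlinarith
    have hqane : qa ≠ 0 := by
      rw [hqaN]
      apply mul_ne_zero (by nlinarith) (ne_of_lt hs)
    have hd0 : qb^2 - 4*qa*qc < 0 := by
      rw [hdisc]
      have h1 : (0:ℝ) < (n₁:ℝ) := by linarith
      have h2 : (0:ℝ) < (n₂:ℝ) := by linarith
      have h3 : 0 < (l₂-l₁)^2 := by positivity
      nlinarith [mul_pos (mul_pos h1 h2) h3, hs]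
    have hqaC : (qa:ℂ) ≠ 0 := Complex.ofReal_ne_zero.mpr hqane
    have hQdeg : Q.natDegree = 2 := by rw [hQ]; exact natDegree_quadratic hqaC
    have hQne : Q ≠ 0 := fun h => by simp [h] at hQdeg
    have hu : (X - C (l₁:ℂ)) ^ (2*n₁-2) ≠ 0 := pow_ne_zero _ (X_sub_C_ne_zero _)
    have hv : (X - C (l₂:ℂ)) ^ (2*n₂-2) ≠ 0 := pow_ne_zero _ (X_sub_C_ne_zero _)
    have hroots : ((p * derivative (derivative p) - C κ * (derivative p) ^ 2).map f).roots
        = ((X - C (l₁:ℂ)) ^ (2*n₁-2)).roots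
          + (((X - C (l₂:ℂ)) ^ (2*n₂-2)).roots + Q.roots) := by
      rw [hFC, roots_C_mul _ (by simpa using pow_ne_zero 2 (Complex.ofReal_ne_zero.mpr ha)),
        roots_mul (mul_ne_zero hu (mul_ne_zero hv hQne)), roots_mul (mul_ne_zero hv hQne)]
    rw [hroots, Multiset.filter_add, Multiset.filter_add]
    have e1 : Multiset.filter (fun z : ℂ => z.im ≠ 0) ((X - C (l₁:ℂ)) ^ (2*n₁-2)).roots = 0 := by
      rw [Multiset.filter_eq_nil]
      intro a hamem
      rw [roots_pow, roots_X_sub_C] at hamem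
      have := Multiset.mem_of_mem_nsmul hamem
      simp at this
      simp [this]
    have e2 : Multiset.filter (fun z : ℂ => z.im ≠ 0) ((X - C (l₂:ℂ)) ^ (2*n₂-2)).roots = 0 := by
      rw [Multiset.filter_eq_nil]
      intro a hamem
      rw [roots_pow, roots_X_sub_C] at hamem
      have := Multiset.mem_of_mem_nsmul hamem
      simp at this
      simp [this]
    rw [e1, e2]
    have e3 : Multiset.filter (fun z : ℂ => z.im ≠ 0) Q.roots = Q.roots := by
      rw [Multiset.filter_eq_self]
      intro z hzmem
      have hzr : Q.IsRoot z := isRoot_of_mem_roots hzmem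
      rw [IsRoot, hQ] at hzr
      simp only [eval_add, eval_mul, eval_pow, eval_C, eval_X] at hzr
      exact quadB qa qb qc hqane hd0 z (by linear_combination hzr)
    rw [e3]
    simp only [Multiset.card_add, Multiset.card_zero, zero_add]
    have := (splits_iff_card_roots (f := Q)).mp (IsAlgClosed.splits Q)
    rw [this, hQdeg]
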